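/- Let f : [−π/2, π/2] → ℝ be nonnegative and integrable, let a_t, ȧ_t : [−π/2, π/2] → ℂ^{M_t} and ȧ_r : [−π/2, π/2] → ℂ^{M_r} be continuous, let X ∈ ℂ^{M_t×L}, let M_r ≥ 1, and define the real numbers t₀ = ∫ f(θ)·‖ȧ_r(θ)‖²·‖X^H a_t(θ)‖² dθ, t₁ = t₀ + M_r·∫ f(θ)·‖X^H ȧ_t(θ)‖² dθ, t₃ = M_r·∫ f(θ)·‖X^H a_t(θ)‖² dθ, and the complex number t₂ = M_r·∫ f(θ)·a_t(θ)^H X X^H ȧ_t(θ) dθ. Let Λ ≥ 0 and c > 0 be reals and assume t₃ > 0 and Λ + c·t₀ > 0. Then the posterior Cramér–Rao bound satisfies (Λ + c·(t₁ − |t₂|²/t₃))⁻¹ ≤ (Λ + c·t₀)⁻¹; that is, PCRB_θ(X) is bounded above by the simplified bound [Λ + c·t₀]⁻¹ (Proposition 2). -/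

import Mathlib

open Matrix MeasureTheory

lemma my_integral_cauchy_schwarz {α : Type*} [MeasurableSpace α] (μ : Measure α)
    (F G : α → ℝ)
    (hF : Integrable (fun x => F x ^ 2) μ) (hG : Integrable (fun x => G x ^ 2) μ)
    (hFG : Integrable (fun x => F x * G x) μ) :
    (∫ x, F x * G x ∂μ) ^ 2 ≤ (∫ x, F x ^ 2 ∂μ) * (∫ x, G x ^ 2 ∂μ) := by
  set A := ∫ x, F x ^ 2 ∂μ with hA
  set B := ∫ x, F x * G x ∂μ with hB
  set C := ∫ x, G x ^ 2 ∂μ with hC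
  have hA0 : 0 ≤ A := integral_nonneg fun x => sq_nonneg _
  have hC0 : 0 ≤ C := integral_nonneg fun x => sq_nonneg _
  have key : ∀ r : ℝ, 0 ≤ A - 2 * r * B + r ^ 2 * C := by
    intro r
    have heq : (fun x => (F x - r * G x) ^ 2)
        = fun x => (F x ^ 2 - 2 * r * (F x * G x)) + r ^ 2 * G x ^ 2 := by
      funext x; ring
    have i1 : Integrable (fun x => F x ^ 2 - 2 * r * (F x * G x)) μ :=
      hF.sub (hFG.const_mul (2 * r))
    have i2 : Integrable (fun x => r ^ 2 * G x ^ 2) μ := hG.const_mul _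
    have h2 : 0 ≤ ∫ x, (F x - r * G x) ^ 2 ∂μ := integral_nonneg fun x => sq_nonneg _
    rw [heq] at h2
    rw [integral_add i1 i2, integral_sub hF (hFG.const_mul (2 * r)),
      integral_const_mul, integral_const_mul] at h2
    linarith
  rcases eq_or_lt_of_le hC0 with hCz | hCp
  · have hB0 : B = 0 := by
      by_contra hB0
      have h1 := key ((A + 1) / (2 * B))
      have h2 : 2 * ((A + 1) / (2 * B)) * B = A + 1 := by field_simp
      rw [← hCz] at h1
      rw [h2] at h1
      linarith
    rw [hB0, ← hCz]
    simp
  · have h := key (B / C)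
    have h1 : 2 * (B / C) * B = 2 * (B ^ 2 / C) := by ring
    have h2 : (B / C) ^ 2 * C = B ^ 2 / C := by field_simp
    rw [h1, h2] at h
    have hle : B ^ 2 / C ≤ A := by linarith
    calc B ^ 2 = B ^ 2 / C * C := by field_simp
    _ ≤ A * C := mul_le_mul_of_nonneg_right hle (le_of_lt hCp)

lemma my_pointwise_cs (L : ℕ) (u v : Fin L → ℂ) :
    ‖∑ l, (starRingEnd ℂ) (u l) * v l‖ ≤
      Real.sqrt (∑ l, ‖u l‖ ^ 2) * Real.sqrt (∑ l, ‖v l‖ ^ 2) := by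
  let U : EuclideanSpace ℂ (Fin L) := WithLp.toLp 2 u
  let V : EuclideanSpace ℂ (Fin L) := WithLp.toLp 2 v
  have h1 : (inner ℂ U V : ℂ) = ∑ l, (starRingEnd ℂ) (u l) * v l := by
    simp [PiLp.inner_apply, RCLike.inner_apply, U, V, mul_comm]
  have h2 : ‖U‖ = Real.sqrt (∑ l, ‖u l‖ ^ 2) := by
    rw [EuclideanSpace.norm_eq]
  have h3 : ‖V‖ = Real.sqrt (∑ l, ‖v l‖ ^ 2) := by
    rw [EuclideanSpace.norm_eq]
  calc ‖∑ l, (starRingEnd ℂ) (u l) * v l‖ = ‖(inner ℂ U V : ℂ)‖ := by rw [h1]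
  _ ≤ ‖U‖ * ‖V‖ := norm_inner_le_norm U V
  _ = _ := by rw [h2, h3]

/-- Proposition 2: the posterior Cramér–Rao bound
`PCRB_θ(X) = (Λ + c (t₁ − |t₂|²/t₃))⁻¹` is bounded above by the simplified
bound `(Λ + c t₀)⁻¹`. -/
theorem pcrb_upper_bound
    (Mr Mt L : ℕ) (hMr : 1 ≤ Mr)
    (f : ℝ → ℝ) (at_ dat : ℝ → Fin Mt → ℂ) (dar : ℝ → Fin Mr → ℂ)
    (X : Matrix (Fin Mt) (Fin L) ℂ)
    (hf0 : ∀ θ ∈ Set.Icc (-(Real.pi / 2)) (Real.pi / 2), 0 ≤ f θ)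
    (hfi : IntervalIntegrable f MeasureTheory.volume (-(Real.pi / 2)) (Real.pi / 2))
    (hcat : Continuous at_) (hcdat : Continuous dat) (hcdar : Continuous dar)
    (t0 t1 t3 Λ c : ℝ) (t2 : ℂ)
    (ht0 : t0 = ∫ θ in (-(Real.pi / 2))..(Real.pi / 2),
        f θ * (∑ i, ‖dar θ i‖ ^ 2) * ∑ l, ‖Xᴴ.mulVec (at_ θ) l‖ ^ 2)
    (ht1 : t1 = t0 + (Mr : ℝ) * ∫ θ in (-(Real.pi / 2))..(Real.pi / 2),
        f θ * ∑ l, ‖Xᴴ.mulVec (dat θ) l‖ ^ 2)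
    (ht3 : t3 = (Mr : ℝ) * ∫ θ in (-(Real.pi / 2))..(Real.pi / 2),
        f θ * ∑ l, ‖Xᴴ.mulVec (at_ θ) l‖ ^ 2)
    (ht2 : t2 = (Mr : ℂ) * ∫ θ in (-(Real.pi / 2))..(Real.pi / 2),
        ((f θ : ℂ) * ∑ l, (starRingEnd ℂ) (Xᴴ.mulVec (at_ θ) l) * Xᴴ.mulVec (dat θ) l))
    (hΛ : 0 ≤ Λ) (hc : 0 < c) (ht3pos : 0 < t3) (hpos : 0 < Λ + c * t0) :
    (Λ + c * (t1 - ‖t2‖ ^ 2 / t3))⁻¹ ≤ (Λ + c * t0)⁻¹ := by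
  set a : ℝ := -(Real.pi / 2) with ha
  set b : ℝ := Real.pi / 2 with hb
  have hab : a ≤ b := by
    have := Real.pi_pos
    rw [ha, hb]; linarith
  set S : Set ℝ := Set.Ioc a b with hS
  set μ : Measure ℝ := volume.restrict S with hμ
  have hSK : S ⊆ Set.Icc a b := Set.Ioc_subset_Icc_self
  -- component functions
  set P : ℝ → ℝ := fun θ => ∑ l, ‖Xᴴ.mulVec (at_ θ) l‖ ^ 2 with hPdef
  set Q : ℝ → ℝ := fun θ => ∑ l, ‖Xᴴ.mulVec (dat θ) l‖ ^ 2 with hQdef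
  -- continuity
  have hu : ∀ l, Continuous fun θ => Xᴴ.mulVec (at_ θ) l := by
    intro l
    simp only [Matrix.mulVec, dotProduct]
    exact continuous_finset_sum _ fun i _ =>
      continuous_const.mul ((continuous_apply i).comp hcat)
  have hv : ∀ l, Continuous fun θ => Xᴴ.mulVec (dat θ) l := by
    intro l
    simp only [Matrix.mulVec, dotProduct]
    exact continuous_finset_sum _ fun i _ =>
      continuous_const.mul ((continuous_apply i).comp hcdat)
  have hP : Continuous P :=
    continuous_finset_sum _ fun l _ => ((hu l).norm.pow 2)
  have hQ : Continuous Q :=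
    continuous_finset_sum _ fun l _ => ((hv l).norm.pow 2)
  have hP0 : ∀ θ, 0 ≤ P θ := fun θ => Finset.sum_nonneg fun l _ => sq_nonneg _
  have hQ0 : ∀ θ, 0 ≤ Q θ := fun θ => Finset.sum_nonneg fun l _ => sq_nonneg _
  -- integrability of f on S
  have hfS : IntegrableOn f S volume := hfi.1
  have hintP : Integrable (fun θ => f θ * P θ) μ :=
    hfS.mul_continuousOn_of_subset hP.continuousOn measurableSet_Ioc isCompact_Icc hSK
  have hintQ : Integrable (fun θ => f θ * Q θ) μ :=
    hfS.mul_continuousOn_of_subset hQ.continuousOn measurableSet_Ioc isCompact_Icc hSK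
  have hintPQ : Integrable (fun θ => f θ * (Real.sqrt (P θ) * Real.sqrt (Q θ))) μ :=
    hfS.mul_continuousOn_of_subset
      ((Real.continuous_sqrt.comp hP).mul (Real.continuous_sqrt.comp hQ)).continuousOn
      measurableSet_Ioc isCompact_Icc hSK
  have hfae : ∀ᵐ θ ∂μ, 0 ≤ f θ := by
    rw [hμ]
    filter_upwards [ae_restrict_mem measurableSet_Ioc] with θ hθ
    exact hf0 θ (hSK hθ)
  -- abbreviations for the three μ-integrals
  set A := ∫ θ, f θ * P θ ∂μ with hA
  set B := ∫ θ, f θ * Q θ ∂μ with hB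
  set D := ∫ θ, f θ * (Real.sqrt (P θ) * Real.sqrt (Q θ)) ∂μ with hD
  have hA0 : 0 ≤ A := by
    refine integral_nonneg_of_ae ?_
    filter_upwards [hfae] with θ hθ
    exact mul_nonneg hθ (hP0 θ)
  have hB0 : 0 ≤ B := by
    refine integral_nonneg_of_ae ?_
    filter_upwards [hfae] with θ hθ
    exact mul_nonneg hθ (hQ0 θ)
  have hD0 : 0 ≤ D := by
    refine integral_nonneg_of_ae ?_
    filter_upwards [hfae] with θ hθ
    exact mul_nonneg hθ (mul_nonneg (Real.sqrt_nonneg _) (Real.sqrt_nonneg _))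
  -- Cauchy-Schwarz for the integrals
  have hCS : D ^ 2 ≤ A * B := by
    have hF2 : (fun θ => (Real.sqrt (f θ) * Real.sqrt (P θ)) ^ 2) =ᵐ[μ]
        fun θ => f θ * P θ := by
      filter_upwards [hfae] with θ hθ
      simp only [mul_pow, Real.sq_sqrt hθ, Real.sq_sqrt (hP0 θ)]
    have hG2 : (fun θ => (Real.sqrt (f θ) * Real.sqrt (Q θ)) ^ 2) =ᵐ[μ]
        fun θ => f θ * Q θ := by
      filter_upwards [hfae] with θ hθ
      simp only [mul_pow, Real.sq_sqrt hθ, Real.sq_sqrt (hQ0 θ)]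
    have hFG : (fun θ => (Real.sqrt (f θ) * Real.sqrt (P θ)) *
        (Real.sqrt (f θ) * Real.sqrt (Q θ))) =ᵐ[μ]
        fun θ => f θ * (Real.sqrt (P θ) * Real.sqrt (Q θ)) := by
      filter_upwards [hfae] with θ hθ
      have : Real.sqrt (f θ) * Real.sqrt (f θ) = f θ := Real.mul_self_sqrt hθ
      calc Real.sqrt (f θ) * Real.sqrt (P θ) * (Real.sqrt (f θ) * Real.sqrt (Q θ))
          = Real.sqrt (f θ) * Real.sqrt (f θ) * (Real.sqrt (P θ) * Real.sqrt (Q θ)) := by ring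
      _ = f θ * (Real.sqrt (P θ) * Real.sqrt (Q θ)) := by rw [this]
    have := my_integral_cauchy_schwarz μ
      (fun θ => Real.sqrt (f θ) * Real.sqrt (P θ))
      (fun θ => Real.sqrt (f θ) * Real.sqrt (Q θ))
      (hintP.congr hF2.symm) (hintQ.congr hG2.symm) (hintPQ.congr hFG.symm)
    rwa [integral_congr_ae hFG, integral_congr_ae hF2, integral_congr_ae hG2] at this
  -- bound on ‖t2‖
  have ht2bound : ‖t2‖ ≤ (Mr : ℝ) * D := by
    rw [ht2]
    rw [norm_mul]
    have hnormMr : ‖(Mr : ℂ)‖ = (Mr : ℝ) := by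
      simp
    rw [hnormMr]
    have h1 : ‖∫ θ in a..b,
        ((f θ : ℂ) * ∑ l, (starRingEnd ℂ) (Xᴴ.mulVec (at_ θ) l) * Xᴴ.mulVec (dat θ) l)‖ ≤ D := by
      rw [intervalIntegral.integral_of_le hab]
      refine le_trans (norm_integral_le_integral_norm _) ?_
      rw [hD]
      refine integral_mono_of_nonneg ?_ hintPQ ?_
      · filter_upwards with θ; positivity
      · filter_upwards [hfae] with θ hθ
        have h2 : ‖(f θ : ℂ) * ∑ l, (starRingEnd ℂ) (Xᴴ.mulVec (at_ θ) l) * Xᴴ.mulVec (dat θ) l‖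
            = f θ * ‖∑ l, (starRingEnd ℂ) (Xᴴ.mulVec (at_ θ) l) * Xᴴ.mulVec (dat θ) l‖ := by
          rw [norm_mul, Complex.norm_real, Real.norm_of_nonneg hθ]
        rw [h2]
        exact mul_le_mul_of_nonneg_left
          (my_pointwise_cs L (Xᴴ.mulVec (at_ θ)) (Xᴴ.mulVec (dat θ))) hθ
    exact mul_le_mul_of_nonneg_left h1 (Nat.cast_nonneg Mr)
  -- rewrite t3, t1 - t0 in terms of A, B
  have ht3A : t3 = (Mr : ℝ) * A := by
    rw [ht3, hA, intervalIntegral.integral_of_le hab]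
  have ht1B : t1 = t0 + (Mr : ℝ) * B := by
    rw [ht1, hB, intervalIntegral.integral_of_le hab]
  -- key inequality : ‖t2‖^2 / t3 ≤ Mr * B
  have hMr0 : (0 : ℝ) < (Mr : ℝ) := by
    exact_mod_cast Nat.lt_of_lt_of_le Nat.zero_lt_one hMr
  have hkey : ‖t2‖ ^ 2 / t3 ≤ (Mr : ℝ) * B := by
    rw [div_le_iff₀ ht3pos, ht3A]
    calc ‖t2‖ ^ 2 ≤ ((Mr : ℝ) * D) ^ 2 := pow_le_pow_left₀ (norm_nonneg t2) ht2bound 2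
    _ = (Mr : ℝ) ^ 2 * D ^ 2 := by ring
    _ ≤ (Mr : ℝ) ^ 2 * (A * B) := by
          exact mul_le_mul_of_nonneg_left hCS (by positivity)
    _ = (Mr : ℝ) * B * ((Mr : ℝ) * A) := by ring
  -- conclude
  have hles : t0 ≤ t1 - ‖t2‖ ^ 2 / t3 := by
    rw [ht1B]
    linarith
  have hpos2 : 0 < Λ + c * (t1 - ‖t2‖ ^ 2 / t3) := by
    have : Λ + c * t0 ≤ Λ + c * (t1 - ‖t2‖ ^ 2 / t3) := by
      have := mul_le_mul_of_nonneg_left hles (le_of_lt hc)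
      linarith
    linarith
  apply inv_anti₀ hpos
  have := mul_le_mul_of_nonneg_left hles (le_of_lt hc)
  linarith
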